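/- Let μ be a measure on ℝ, and let θ₀, α ∈ ℝ. For κ ∈ ℝ define V(κ) = (∫ x²·exp((2κ+α)·θ₀·x) dμ(x)) / (∫ x²·exp((κ+1)·θ₀·x) dμ(x))². Fix κ ∈ ℝ and assume the functions x ↦ x²·exp((2κ+α)·θ₀·x), x ↦ x²·exp((κ+1)·θ₀·x), and x ↦ x²·exp((2−α)·θ₀·x) are μ-integrable with 0 < ∫ x²·exp((2−α)·θ₀·x) dμ and 0 < ∫ x²·exp((κ+1)·θ₀·x) dμ. Then V(κ) ≥ V(1−α) = 1 / ∫ x²·exp((2−α)·θ₀·x) dμ(x). That is, among generalized PML estimators in the one-dimensional uncensored model with heteroskedasticity index α, the asymptotic variance is minimized at κ = 1 − α. -/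

import Mathlib

open Real MeasureTheory

/-- In the one-dimensional uncensored model with heteroskedasticity index
`α`, the asymptotic variance of the generalized PML estimator with index `κ`,
`V(κ) = (∫ x² exp ((2κ+α)θ₀x) dμ) / (∫ x² exp ((κ+1)θ₀x) dμ)²`, satisfies
`V(κ) ≥ V(1-α) = 1 / ∫ x² exp ((2-α)θ₀x) dμ`: the variance is minimized at `κ = 1 - α`. -/
theorem generalized_pml_variance_minimized (μ : Measure ℝ) (θ₀ α κ : ℝ)
    (h1 : Integrable (fun x => x ^ 2 * Real.exp ((2 * κ + α) * θ₀ * x)) μ)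
    (h2 : Integrable (fun x => x ^ 2 * Real.exp ((κ + 1) * θ₀ * x)) μ)
    (h3 : Integrable (fun x => x ^ 2 * Real.exp ((2 - α) * θ₀ * x)) μ)
    (hpos3 : 0 < ∫ x, x ^ 2 * Real.exp ((2 - α) * θ₀ * x) ∂μ)
    (hpos2 : 0 < ∫ x, x ^ 2 * Real.exp ((κ + 1) * θ₀ * x) ∂μ) :
    (∫ x, x ^ 2 * Real.exp ((2 * κ + α) * θ₀ * x) ∂μ)
        / (∫ x, x ^ 2 * Real.exp ((κ + 1) * θ₀ * x) ∂μ) ^ 2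
      ≥ 1 / ∫ x, x ^ 2 * Real.exp ((2 - α) * θ₀ * x) ∂μ ∧
    (∫ x, x ^ 2 * Real.exp ((2 * (1 - α) + α) * θ₀ * x) ∂μ)
        / (∫ x, x ^ 2 * Real.exp (((1 - α) + 1) * θ₀ * x) ∂μ) ^ 2
      = 1 / ∫ x, x ^ 2 * Real.exp ((2 - α) * θ₀ * x) ∂μ := by
  set A := ∫ x, x ^ 2 * Real.exp ((2 * κ + α) * θ₀ * x) ∂μ with hA
  set B := ∫ x, x ^ 2 * Real.exp ((κ + 1) * θ₀ * x) ∂μ with hB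
  set C := ∫ x, x ^ 2 * Real.exp ((2 - α) * θ₀ * x) ∂μ with hC
  constructor
  · -- Cauchy–Schwarz
    set f : ℝ → ℝ := fun x => |x| * Real.exp ((2 * κ + α) * θ₀ * x / 2) with hf
    set g : ℝ → ℝ := fun x => |x| * Real.exp ((2 - α) * θ₀ * x / 2) with hg
    have hfsq : ∀ x, f x ^ 2 = x ^ 2 * Real.exp ((2 * κ + α) * θ₀ * x) := by
      intro x
      simp only [hf, mul_pow, sq_abs, ← Real.exp_nat_mul, ← Real.exp_add]
      ring_nf
    have hgsq : ∀ x, g x ^ 2 = x ^ 2 * Real.exp ((2 - α) * θ₀ * x) := by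
      intro x
      simp only [hg, mul_pow, sq_abs, ← Real.exp_nat_mul, ← Real.exp_add]
      ring_nf
    have hfg : ∀ x, f x * g x = x ^ 2 * Real.exp ((κ + 1) * θ₀ * x) := by
      intro x
      simp only [hf, hg, ← Real.exp_add]
      rw [show |x| * Real.exp ((2 * κ + α) * θ₀ * x / 2) * (|x| * Real.exp ((2 - α) * θ₀ * x / 2))
          = (|x| * |x|) * Real.exp ((2 * κ + α) * θ₀ * x / 2 + (2 - α) * θ₀ * x / 2) by
        rw [Real.exp_add]; ring]
      rw [abs_mul_abs_self]
      congr 1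
      · ring
      · congr 1; ring
    have hfm : AEStronglyMeasurable f μ := by
      apply AEStronglyMeasurable.mul
      · exact (continuous_abs).aestronglyMeasurable
      · exact (Real.continuous_exp.comp (by continuity)).aestronglyMeasurable
    have hgm : AEStronglyMeasurable g μ := by
      apply AEStronglyMeasurable.mul
      · exact (continuous_abs).aestronglyMeasurable
      · exact (Real.continuous_exp.comp (by continuity)).aestronglyMeasurable
    have hfL2 : MemLp f 2 μ := by
      rw [memLp_two_iff_integrable_sq hfm]
      exact (integrable_congr (Filter.Eventually.of_forall hfsq)).mpr h1
    have hgL2 : MemLp g 2 μ := by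
      rw [memLp_two_iff_integrable_sq hgm]
      exact (integrable_congr (Filter.Eventually.of_forall hgsq)).mpr h3
    have hconj : (2 : ℝ).HolderConjugate 2 := Real.HolderConjugate.two_two
    have hfnn : 0 ≤ᵐ[μ] f :=
      Filter.Eventually.of_forall fun x =>
        mul_nonneg (abs_nonneg x) (Real.exp_pos _).le
    have hgnn : 0 ≤ᵐ[μ] g :=
      Filter.Eventually.of_forall fun x =>
        mul_nonneg (abs_nonneg x) (Real.exp_pos _).le
    have key := integral_mul_le_Lp_mul_Lq_of_nonneg hconj hfnn hgnn
      (by simpa using hfL2) (by simpa using hgL2)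
    have hBfg : B = ∫ x, f x * g x ∂μ := by
      rw [hB]; exact integral_congr_ae (Filter.Eventually.of_forall fun x => (hfg x).symm)
    have hAf : A = ∫ x, f x ^ (2:ℝ) ∂μ := by
      rw [hA]
      refine integral_congr_ae (Filter.Eventually.of_forall fun x => ?_)
      simp only [Real.rpow_two]
      exact (hfsq x).symm
    have hCg : C = ∫ x, g x ^ (2:ℝ) ∂μ := by
      rw [hC]
      refine integral_congr_ae (Filter.Eventually.of_forall fun x => ?_)
      simp only [Real.rpow_two]
      exact (hgsq x).symm
    have hB_le : B ≤ A ^ ((1:ℝ)/2) * C ^ ((1:ℝ)/2) := by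
      rw [hBfg, hAf, hCg]; exact key
    have hAnn : 0 ≤ A := by
      rw [hAf]
      exact integral_nonneg fun x => Real.rpow_nonneg (by positivity) _
    have hB2 : B ^ 2 ≤ A * C := by
      have h := pow_le_pow_left₀ hpos2.le hB_le 2
      calc B ^ 2 ≤ (A ^ ((1:ℝ)/2) * C ^ ((1:ℝ)/2)) ^ 2 := h
        _ = A * C := by
          rw [mul_pow, ← Real.rpow_natCast (A ^ ((1:ℝ)/2)) 2, ← Real.rpow_natCast (C ^ ((1:ℝ)/2)) 2,
            ← Real.rpow_mul hAnn, ← Real.rpow_mul hpos3.le]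
          norm_num
    rw [ge_iff_le, div_le_div_iff₀ hpos3 (pow_pos hpos2 2)]
    linarith
  · have e1 : (2 * (1 - α) + α) = (2 - α) := by ring
    have e2 : ((1 - α) + 1) = (2 - α) := by ring
    rw [e1, e2]
    rw [pow_two, ← div_div, div_self hpos3.ne', one_div]
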